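/- Let (A ⊆ B) be a subgroup embedding with B free abelian of finite rank, viewed as a Gorenstein-projective Z[ε]-module. Then the total number of indecomposable summands in any direct sum decomposition into indecomposables equals rank B = dim_Q(B ⊗ Q), and the multiplicity of the summand (0 ⊆ Z) equals dim_Q((B/A) ⊗ Q). In particular these quantities are independent of the chosen decomposition. -/

import Mathlib

open TensorProduct

/-- The differential of the Gorenstein-projective `ℤ[ε]`-module associated with a
subgroup embedding `A ⊆ B`: on the underlying group `A × B`, `ε · (a, b) = (0, a)`. -/
def eEmb {B : Type*} [AddCommGroup B] [Module ℤ B] (A : Submodule ℤ B) :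
    (A × B) →ₗ[ℤ] (A × B) where
  toFun x := (0, (x.1 : B))
  map_add' x y := by simp [Prod.ext_iff]
  map_smul' c x := by simp [Prod.ext_iff]


/-- Any additive equivalence of abelian groups is `ℤ`-linear for arbitrary module
structures. -/
def intLinearOfAddEquiv {M N : Type*} [AddCommGroup M] [AddCommGroup N]
    [Module ℤ M] [Module ℤ N] (e : M ≃+ N) : M ≃ₗ[ℤ] N :=
  AddEquiv.toLinearEquiv e (fun c x => by
    have h := map_intCast_smul e ℤ ℤ c x
    simpa using h)

set_option maxHeartbeats 1000000 in
/-- For a subgroup embedding `(A ⊆ B)` with `B` free abelian of finite rank, viewed as a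
Gorenstein-projective `ℤ[ε]`-module, in any decomposition into indecomposables
`(Iᵢ ⊆ ℤ)`: the number of summands equals `rank B = dim_ℚ(B ⊗ ℚ)`, and the multiplicity
of the summand `(0 ⊆ ℤ)` equals `dim_ℚ((B/A) ⊗ ℚ)`; in particular both are independent
of the decomposition. -/
theorem stmt9 (B : Type) [AddCommGroup B] [Module ℤ B] [Module.Free ℤ B]
    [Module.Finite ℤ B] (A : Submodule ℤ B) (k : ℕ) (I : Fin k → Submodule ℤ ℤ)
    (φ : (A × B) ≃ₗ[ℤ] ((i : Fin k) → ((I i) × ℤ)))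
    (hφ : ∀ x (i : Fin k), φ (eEmb A x) i = eEmb (I i) (φ x i)) :
    k = Module.finrank ℚ (ℚ ⊗[ℤ] B) ∧
    Nat.card {i : Fin k // I i = ⊥} = Module.finrank ℚ (ℚ ⊗[ℤ] (B ⧸ A)) := by
  -- key fact (1): first component of φ (0, b) vanishes
  have fact1 : ∀ (b : B) (i : Fin k), (φ (0, b) i).1 = 0 := by
    intro b i
    have h := hφ (0, b) i
    have h0 : eEmb A (0, b) = 0 := by simp [eEmb]
    rw [h0, map_zero] at h
    have : ((φ (0, b) i).1 : ℤ) = 0 := by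
      have := congrArg Prod.snd h
      simpa [eEmb] using this.symm
    exact Subtype.ext this
  -- the map ψ : B →ₗ (Fin k → ℤ)
  set ψ : B →ₗ[ℤ] (Fin k → ℤ) :=
    (LinearMap.pi fun i => LinearMap.snd ℤ (I i) ℤ ∘ₗ LinearMap.proj i) ∘ₗ
      (φ.toLinearMap ∘ₗ
        { toFun := fun b => ((0 : A), b)
          map_add' := fun x y => by ext <;> simp
          map_smul' := fun c x => by
            ext
            · simp
            · exact int_smul_eq_zsmul _ c x }) with hψ
  have ψ_apply : ∀ (b : B) (i : Fin k), ψ b i = (φ (0, b) i).2 := fun b i => rfl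
  have ψ_inj : Function.Injective ψ := by
    intro b b' hb
    have : ∀ b : B, ψ b = 0 → b = 0 := by
      intro b h
      have hz : φ (0, b) = 0 := by
        funext i
        have h2 : (φ (0, b) i).2 = 0 := by rw [← ψ_apply]; exact congrFun h i
        have h1 := fact1 b i
        ext
        · exact congrArg Subtype.val h1
        · exact h2
      have := φ.injective (hz.trans (map_zero φ).symm)
      exact congrArg Prod.snd this
    have := this (b - b') (by rw [map_sub, hb, sub_self])
    exact sub_eq_zero.mp this
  have ψ_surj : Function.Surjective ψ := by
    intro f
    set x := φ.symm (fun i => ((0 : I i), f i)) with hx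
    have hφx : φ x = fun i => ((0 : I i), f i) := φ.apply_symm_apply _
    have hx1 : x.1 = 0 := by
      have he : ∀ i, φ (eEmb A x) i = 0 := by
        intro i
        rw [hφ x i, hφx]
        simp [eEmb]
      have : eEmb A x = 0 := φ.injective (by funext i; simpa using he i)
      have : ((x.1 : B)) = 0 := congrArg Prod.snd this
      exact Subtype.ext this
    refine ⟨x.2, ?_⟩
    funext i
    have hxx : ((0 : A), x.2) = x := by
      ext
      · exact (congrArg Subtype.val hx1).symm
      · rfl
    rw [ψ_apply, hxx, hφx]
  -- fact (2): for b ∈ A, ψ b i ∈ I i; conversely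
  have mem_iff : ∀ b : B, b ∈ A ↔ ∀ i, ψ b i ∈ I i := by
    intro b
    constructor
    · intro hb i
      have key : ((0 : A), b) = eEmb A (⟨b, hb⟩, 0) := by simp [eEmb]
      rw [ψ_apply, key, hφ]
      simp only [eEmb, LinearMap.coe_mk, AddHom.coe_mk]
      exact Subtype.coe_prop _
    · intro h
      set z := φ.symm (fun i => ((⟨ψ b i, h i⟩ : I i), 0)) with hz
      have hφz : φ z = fun i => ((⟨ψ b i, h i⟩ : I i), 0) := φ.apply_symm_apply _
      have he : φ (eEmb A z) = φ (0, b) := by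
        funext i
        rw [hφ z i, hφz]
        ext
        · exact congrArg Subtype.val (fact1 b i).symm
        · exact (ψ_apply b i).symm
      have he2 : eEmb A z = (0, b) := φ.injective he
      have : ((z.1 : B)) = b := congrArg Prod.snd he2
      rw [← this]; exact z.1.2
  -- the map ρ : B →ₗ ∀ i, ℤ ⧸ I i
  set ρ : B →ₗ[ℤ] (∀ i, ℤ ⧸ I i) :=
    (LinearMap.pi fun i => (I i).mkQ ∘ₗ LinearMap.proj i) ∘ₗ ψ with hρ
  have ρ_apply : ∀ b i, ρ b i = Submodule.Quotient.mk (ψ b i) := fun b i => rfl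
  have ρ_ker : LinearMap.ker ρ = A := by
    ext b
    rw [LinearMap.mem_ker, mem_iff b]
    constructor
    · intro h i
      have := congrFun h i
      rw [ρ_apply] at this
      exact (Submodule.Quotient.mk_eq_zero _).mp this
    · intro h
      funext i
      rw [ρ_apply]
      exact (Submodule.Quotient.mk_eq_zero _).mpr (h i)
  have ρ_surj : Function.Surjective ρ := by
    intro g
    choose f hf using fun i => Submodule.Quotient.mk_surjective (I i) (g i)
    obtain ⟨b, hb⟩ := ψ_surj f
    refine ⟨b, ?_⟩
    funext i
    rw [ρ_apply, hb]
    exact hf i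
  -- the two linear equivalences
  have eqB : B ≃ₗ[ℤ] (Fin k → ℤ) := LinearEquiv.ofBijective ψ ⟨ψ_inj, ψ_surj⟩
  set fl := A.liftQ ρ (le_of_eq ρ_ker.symm) with hfl
  have fl_apply : ∀ b : B, fl (Submodule.Quotient.mk b) = ρ b := by
    intro b; rw [hfl, Submodule.liftQ_apply]
  have fl_inj : Function.Injective fl := by
    intro x y hxy
    obtain ⟨b, rfl⟩ := Submodule.Quotient.mk_surjective A x
    obtain ⟨b', rfl⟩ := Submodule.Quotient.mk_surjective A y
    have h1 : ρ b = ρ b' := by rw [← fl_apply, ← fl_apply]; exact hxy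
    rw [Submodule.Quotient.eq]
    rw [← ρ_ker, LinearMap.mem_ker, map_sub, h1, sub_self]
  have fl_surj : Function.Surjective fl := by
    intro g
    obtain ⟨b, hb⟩ := ρ_surj g
    exact ⟨Submodule.Quotient.mk b, by rw [fl_apply]; exact hb⟩
  have e0 : (B ⧸ A) ≃+ (∀ i, ℤ ⧸ I i) :=
    AddEquiv.mk' (Equiv.ofBijective fl ⟨fl_inj, fl_surj⟩) (map_add fl)
  have eqQ : (B ⧸ A) ≃ₗ[ℤ] (∀ i, ℤ ⧸ I i) := intLinearOfAddEquiv e0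
  constructor
  · -- first goal
    rw [Module.finrank_baseChange]
    rw [eqB.finrank_eq, Module.finrank_pi]
    simp
  · -- second goal
    have e1 : (ℚ ⊗[ℤ] (B ⧸ A)) ≃ₗ[ℚ] (ℚ ⊗[ℤ] (∀ i, ℤ ⧸ I i)) := eqQ.baseChange ℤ ℚ _ _
    have e2 : (ℚ ⊗[ℤ] (∀ i, ℤ ⧸ I i)) ≃ₗ[ℚ] (∀ i, ℚ ⊗[ℤ] (ℤ ⧸ I i)) :=
      TensorProduct.piRight ℤ ℚ ℚ _
    rw [e1.finrank_eq, e2.finrank_eq]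
    have subsing : ∀ i, I i ≠ ⊥ → Subsingleton (ℚ ⊗[ℤ] (ℤ ⧸ I i)) := by
      intro i hi
      obtain ⟨n, hn, hnz⟩ : ∃ n : ℤ, n ∈ I i ∧ n ≠ 0 := by
        by_contra h
        push_neg at h
        exact hi (by ext x; simp only [Submodule.mem_bot]; exact ⟨fun hx => by_contra fun hne => hne (h x hx), fun hx => hx ▸ (I i).zero_mem⟩)
      constructor
      intro x y
      have hzero : ∀ z : ℚ ⊗[ℤ] (ℤ ⧸ I i), z = 0 := by
        intro z
        induction z using TensorProduct.induction_on with
        | zero => rfl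
        | tmul q m =>
          have hm : n • m = 0 := by
            obtain ⟨m', rfl⟩ := Submodule.Quotient.mk_surjective (I i) m
            rw [← Submodule.Quotient.mk_smul, Submodule.Quotient.mk_eq_zero]
            simpa [smul_eq_mul, mul_comm] using (I i).smul_mem m' hn
          have hq : q = n • (q / (n : ℚ)) := by
            rw [zsmul_eq_mul]
            field_simp
          rw [hq, TensorProduct.smul_tmul, hm, TensorProduct.tmul_zero]
        | add a b ha hb => rw [ha, hb, add_zero]
      rw [hzero x, hzero y]
    classical
    have fr : ∀ i, Module.finrank ℚ (ℚ ⊗[ℤ] (ℤ ⧸ I i)) = if I i = ⊥ then 1 else 0 := by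
      intro i
      by_cases h : I i = ⊥
      · rw [if_pos h]
        set fl2 := (I i).liftQ (LinearMap.id (R := ℤ) (M := ℤ))
          (by rw [h]; exact bot_le) with hfl2
        have fl2_apply : ∀ a : ℤ, fl2 (Submodule.Quotient.mk a) = a := by
          intro a; rw [hfl2, Submodule.liftQ_apply]; rfl
        have fl2_inj : Function.Injective fl2 := by
          intro x y hxy
          obtain ⟨a, rfl⟩ := Submodule.Quotient.mk_surjective (I i) x
          obtain ⟨b, rfl⟩ := Submodule.Quotient.mk_surjective (I i) y
          rw [fl2_apply, fl2_apply] at hxy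
          rw [hxy]
        have fl2_surj : Function.Surjective fl2 := fun a =>
          ⟨Submodule.Quotient.mk a, fl2_apply a⟩
        have e3' : ((ℤ ⧸ I i)) ≃+ ℤ :=
          AddEquiv.mk' (Equiv.ofBijective fl2 ⟨fl2_inj, fl2_surj⟩) (map_add fl2)
        have e3 : ((ℤ ⧸ I i)) ≃ₗ[ℤ] ℤ := intLinearOfAddEquiv e3'
        have e4 : (ℚ ⊗[ℤ] (ℤ ⧸ I i)) ≃ₗ[ℚ] (ℚ ⊗[ℤ] ℤ) := e3.baseChange ℤ ℚ _ _
        rw [e4.finrank_eq, Module.finrank_baseChange, Module.finrank_self]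
      · rw [if_neg h]
        have := subsing i h
        exact Module.finrank_zero_of_subsingleton
    haveI : ∀ j : Fin k, Module.Finite ℚ (ℚ ⊗[ℤ] (ℤ ⧸ I j)) :=
      fun j => Module.Finite.base_change ℤ ℚ (ℤ ⧸ I j)
    haveI : ∀ j : Fin k, Module.Free ℚ (ℚ ⊗[ℤ] (ℤ ⧸ I j)) :=
      fun j => Module.Free.of_divisionRing ℚ _
    rw [Module.finrank_pi_fintype]
    simp_rw [fr]
    rw [Nat.card_eq_fintype_card, Fintype.card_subtype, Finset.card_filter]
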